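/- Let G = (N, E) be a tree on n+1 nodes rooted at node 0, and let W be a Hermitian partial matrix defined on G (entries W_jj for all j and W_jk for (j,k) ∈ E) such that each 2×2 principal submatrix W(j,k) = [[W_jj, W_jk],[W_kj, W_kk]] is positive semidefinite with W_jj W_kk = |W_jk|². Then there exists x ∈ ℂ^{n+1} with |x_j|² = W_jj for all j and x_j x_k^H = W_jk for all (j,k) ∈ E. -/

import Mathlib

open SimpleGraph

/-- Unit "phase" of a complex number (1 if the number is 0). -/
noncomputable def cphase (z : ℂ) : ℂ := if z = 0 then 1 else z / ((‖z‖ : ℝ) : ℂ)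

lemma abs_cphase (z : ℂ) : ‖cphase z‖ = 1 := by
  unfold cphase
  split_ifs with h
  · simp
  · rw [norm_div]
    simp [h, div_self]

lemma abs_mul_cphase (z : ℂ) : ((‖z‖ : ℝ) : ℂ) * cphase z = z := by
  unfold cphase
  split_ifs with h
  · simp [h]
  · rw [mul_div_cancel₀]
    simpa using h

lemma conj_cphase (z : ℂ) : starRingEnd ℂ (cphase z) = cphase (starRingEnd ℂ z) := by
  unfold cphase
  split_ifs with h h' h'
  · simp
  · exact absurd (by simp [h]) h'
  · exact absurd (by simpa using congrArg (starRingEnd ℂ) h') h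
  · simp [map_div₀, Complex.norm_conj]

variable {V : Type*} {G : SimpleGraph V}

/-- Product of edge phases along a walk (child-to-parent direction). -/
noncomputable def wphase (Wo : V → V → ℂ) : ∀ {u v : V}, G.Walk u v → ℂ
  | _, _, SimpleGraph.Walk.nil => 1
  | u, _, SimpleGraph.Walk.cons (v := b) _ p => cphase (Wo b u) * wphase Wo p

@[simp] lemma wphase_nil (Wo : V → V → ℂ) {u : V} :
    wphase Wo (SimpleGraph.Walk.nil : G.Walk u u) = 1 := rfl

@[simp] lemma wphase_cons (Wo : V → V → ℂ) {u b v : V} (h : G.Adj u b) (p : G.Walk b v) :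
    wphase Wo (SimpleGraph.Walk.cons h p) = cphase (Wo b u) * wphase Wo p := rfl

lemma wphase_append (Wo : V → V → ℂ) {u v w : V} (p : G.Walk u v) (q : G.Walk v w) :
    wphase Wo (p.append q) = wphase Wo p * wphase Wo q := by
  induction p with
  | nil => simp
  | cons h p ih => simp [ih, mul_assoc]

lemma wphase_concat (Wo : V → V → ℂ) {u v w : V} (p : G.Walk u v) (h : G.Adj v w) :
    wphase Wo (p.concat h) = wphase Wo p * cphase (Wo w v) := by
  rw [SimpleGraph.Walk.concat_eq_append, wphase_append]
  simp

lemma abs_wphase (Wo : V → V → ℂ) {u v : V} (p : G.Walk u v) :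
    ‖wphase Wo p‖ = 1 := by
  induction p with
  | nil => simp
  | cons h p ih => simp [map_mul, ih, abs_cphase]

lemma mul_conj_wphase (Wo : V → V → ℂ) {u v : V} (p : G.Walk u v) :
    wphase Wo p * starRingEnd ℂ (wphase Wo p) = 1 := by
  rw [Complex.mul_conj, ← Complex.sq_norm, abs_wphase]
  norm_num

lemma concat_isPath {u v w : V} {p : G.Walk u v} (hp : p.IsPath) (h : G.Adj v w)
    (hw : w ∉ p.support) : (p.concat h).IsPath := by
  rw [← SimpleGraph.Walk.isPath_reverse_iff, SimpleGraph.Walk.reverse_concat]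
  exact (hp.reverse).cons (by simpa using hw)

theorem partial_matrix_tree_completion (n : ℕ) (G : SimpleGraph (Fin (n + 1)))
    (htree : G.IsTree)
    (Wd : Fin (n + 1) → ℝ) (Wo : Fin (n + 1) → Fin (n + 1) → ℂ)
    (hdiag : ∀ j, 0 ≤ Wd j)
    (hherm : ∀ j k, G.Adj j k → Wo k j = starRingEnd ℂ (Wo j k))
    (hrank1 : ∀ j k, G.Adj j k → Wd j * Wd k = ‖Wo j k‖ ^ 2) :
    ∃ x : Fin (n + 1) → ℂ,
      (∀ j, ‖x j‖ ^ 2 = Wd j) ∧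
      (∀ j k, G.Adj j k → x j * starRingEnd ℂ (x k) = Wo j k) := by
  classical
  -- choose the unique path from 0 to each vertex
  have hpath : ∀ j : Fin (n + 1), ∃ p : G.Walk 0 j, p.IsPath := fun j =>
    (htree.existsUnique_path 0 j).exists
  choose p hp using hpath
  have huniq : ∀ (j : Fin (n + 1)) (q : G.Walk 0 j), q.IsPath → q = p j := fun j q hq =>
    (htree.existsUnique_path 0 j).unique hq (hp j)
  -- magnitude and rank-1 facts
  have habs : ∀ j k, G.Adj j k →
      Real.sqrt (Wd j) * Real.sqrt (Wd k) = ‖Wo j k‖ := by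
    intro j k hjk
    rw [← Real.sqrt_mul (hdiag j), hrank1 j k hjk, Real.sqrt_sq (norm_nonneg _)]
  refine ⟨fun j => (Real.sqrt (Wd j) : ℂ) * wphase Wo (p j), fun j => ?_, fun j k hjk => ?_⟩
  · rw [norm_mul, abs_wphase, mul_one, Complex.norm_real, Real.norm_eq_abs,
      abs_of_nonneg (Real.sqrt_nonneg _), Real.sq_sqrt (hdiag j)]
  · -- the key step: relate the paths to j and to k
    have key : p k = (p j).concat hjk ∨ p j = (p k).concat hjk.symm := by
      by_cases hk : k ∈ (p j).support
      · right
        have htake : ((p j).takeUntil k hk) = p k :=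
          huniq k _ ((hp j).takeUntil hk)
        have hdrop : (p j).dropUntil k hk = SimpleGraph.Walk.cons hjk.symm SimpleGraph.Walk.nil := by
          have h1 : ((p j).dropUntil k hk).IsPath := (hp j).dropUntil hk
          have h2 : (SimpleGraph.Walk.cons hjk.symm (SimpleGraph.Walk.nil) : G.Walk k j).IsPath := by
            simp [SimpleGraph.Walk.cons_isPath_iff, hjk.ne']
          have := htree.IsAcyclic.path_unique ⟨_, h1⟩ ⟨_, h2⟩
          exact congrArg Subtype.val this
        rw [SimpleGraph.Walk.concat_eq_append, ← htake, ← hdrop,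
          SimpleGraph.Walk.take_spec]
      · left
        exact (huniq k _ (concat_isPath (hp j) hjk hk)).symm
    have hWo : (↑(Real.sqrt (Wd j)) : ℂ) * ↑(Real.sqrt (Wd k)) * cphase (Wo j k) = Wo j k := by
      rw [← Complex.ofReal_mul, habs j k hjk, abs_mul_cphase]
    show (↑(Real.sqrt (Wd j)) : ℂ) * wphase Wo (p j) *
        starRingEnd ℂ ((↑(Real.sqrt (Wd k)) : ℂ) * wphase Wo (p k)) = Wo j k
    rcases key with hkey | hkey
    · rw [hkey, wphase_concat, map_mul, map_mul, conj_cphase,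
        hherm j k hjk, Complex.conj_conj, Complex.conj_ofReal]
      have : (↑(Real.sqrt (Wd j)) : ℂ) * wphase Wo (p j) *
          (↑(Real.sqrt (Wd k)) * (starRingEnd ℂ (wphase Wo (p j)) * cphase (Wo j k))) =
          ↑(Real.sqrt (Wd j)) * ↑(Real.sqrt (Wd k)) * cphase (Wo j k) *
          (wphase Wo (p j) * starRingEnd ℂ (wphase Wo (p j))) := by ring
      rw [this, mul_conj_wphase, mul_one, hWo]
    · rw [hkey, wphase_concat, map_mul, Complex.conj_ofReal]
      have : (↑(Real.sqrt (Wd j)) : ℂ) * (wphase Wo (p k) * cphase (Wo j k)) *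
          (↑(Real.sqrt (Wd k)) * starRingEnd ℂ (wphase Wo (p k))) =
          ↑(Real.sqrt (Wd j)) * ↑(Real.sqrt (Wd k)) * cphase (Wo j k) *
          (wphase Wo (p k) * starRingEnd ℂ (wphase Wo (p k))) := by ring
      rw [this, mul_conj_wphase, mul_one, hWo]
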